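/- Determinant law det(J_EE) = -det(J_DFE): for the one-susceptible rank-one model S' = Λ - μ_S S - S β⃗I, I' = αSβ⃗I + AI with A Metzler Hurwitz, R₀ = (Λ/μ_S)β⃗(-A)^{-1}α > 1, endemic equilibrium (S̄, Ī) satisfying Λ = μ_S S̄ + S̄β⃗Ī and AĪ = -αS̄β⃗Ī with q* := β⃗Ī = μ_S(R₀-1), the Jacobian J_EE = [[-μ_S - q*, -S̄β⃗],[q*α, A + S̄αβ⃗]] satisfies det(J_EE) = μ_S·det(A)·(1 - R₀) = -det(J_DFE). -/

import Mathlib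

open Matrix

/-- A matrix is Metzler if its off-diagonal entries are nonnegative. -/
def IsMetzler {n : ℕ} (A : Matrix (Fin n) (Fin n) ℝ) : Prop :=
  ∀ i j, i ≠ j → 0 ≤ A i j

/-- A matrix is Hurwitz if all its (complex) eigenvalues have negative real part. -/
def IsHurwitz {n : ℕ} (A : Matrix (Fin n) (Fin n) ℝ) : Prop :=
  ∀ μ ∈ spectrum ℂ (A.map (algebraMap ℝ ℂ)), μ.re < 0

lemma det_add_smul_vecMulVec {n : ℕ} (A : Matrix (Fin n) (Fin n) ℝ)
    (hA : IsUnit A.det) (c : ℝ) (u v : Fin n → ℝ) :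
    (A + c • Matrix.vecMulVec u v).det = A.det * (1 + c * (v ⬝ᵥ A⁻¹.mulVec u)) := by
  have h1 : c • Matrix.vecMulVec u v = Matrix.replicateCol (Fin 1) (c • u) * Matrix.replicateRow (Fin 1) v := by
    refine Eq.trans ?_ (vecMulVec_eq (Fin 1) (c • u) v)
    ext i j
    simp [vecMulVec_apply, mul_assoc]
  rw [h1, Matrix.det_add_mul _ _ hA]
  congr 1
  rw [← Matrix.replicateRow_vecMul, Matrix.det_fin_one]
  show (1 : ℝ) + _ = _
  simp only [Matrix.add_apply, Matrix.one_apply_eq, Matrix.replicateRow_mul_replicateCol_apply]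
  rw [← Matrix.dotProduct_mulVec]
  simp [mulVec_smul, mul_comm]

/-- Determinant law `det(J_EE) = -det(J_DFE)` for the one-susceptible rank-one model:
`det J_EE = μ_S det(A) (1 - R₀) = - det J_DFE`. -/
theorem determinant_law {n : ℕ}
    (A : Matrix (Fin n) (Fin n) ℝ) (hM : IsMetzler A) (hH : IsHurwitz A)
    (α : Fin n → ℝ) (hα : ∀ i, 0 ≤ α i) (hαsum : ∑ i, α i = 1)
    (β : Fin n → ℝ) (hβ : ∀ i, 0 ≤ β i)
    (μS lam S₀ R₀ : ℝ) (hμ : 0 < μS) (hlam : 0 < lam) (hS₀ : S₀ = lam / μS)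
    (hR₀ : R₀ = S₀ * (β ⬝ᵥ (-A)⁻¹.mulVec α)) (hR₀gt : 1 < R₀)
    (Sb : ℝ) (Ib : Fin n → ℝ) (qs : ℝ)
    (hqs : qs = β ⬝ᵥ Ib)
    (hEE1 : lam = μS * Sb + Sb * (β ⬝ᵥ Ib))
    (hEE2 : A.mulVec Ib = -(Sb * (β ⬝ᵥ Ib)) • α)
    (hqsval : qs = μS * (R₀ - 1))
    (JDFE JEE : Matrix (Fin 1 ⊕ Fin n) (Fin 1 ⊕ Fin n) ℝ)
    (hJDFE : JDFE = Matrix.fromBlocks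
        (Matrix.of fun (_ : Fin 1) (_ : Fin 1) => -μS)
        (Matrix.of fun (_ : Fin 1) (j : Fin n) => -(S₀ * β j))
        (0 : Matrix (Fin n) (Fin 1) ℝ)
        (A + S₀ • Matrix.vecMulVec α β))
    (hJEE : JEE = Matrix.fromBlocks
        (Matrix.of fun (_ : Fin 1) (_ : Fin 1) => -μS - qs)
        (Matrix.of fun (_ : Fin 1) (j : Fin n) => -(Sb * β j))
        (Matrix.of fun (i : Fin n) (_ : Fin 1) => qs * α i)
        (A + Sb • Matrix.vecMulVec α β)) :
    JEE.det = μS * A.det * (1 - R₀) ∧ JEE.det = -JDFE.det := by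
  -- A has nonzero determinant since it is Hurwitz
  have hdet : IsUnit A.det := by
    rw [isUnit_iff_ne_zero]
    intro h0
    have hnu : ¬ IsUnit (A.map (algebraMap ℝ ℂ)) := by
      rw [Matrix.isUnit_iff_isUnit_det, ← RingHom.mapMatrix_apply, ← RingHom.map_det, h0, map_zero]
      exact not_isUnit_zero
    have := hH 0 ((spectrum.zero_mem_iff ℂ).mpr hnu)
    simp at this
  -- basic positivity and algebraic relations
  have hR₀pos : (0:ℝ) < R₀ := lt_trans one_pos hR₀gt
  have hR₀ne : R₀ ≠ 0 := ne_of_gt hR₀pos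
  have hS₀pos : 0 < S₀ := by rw [hS₀]; positivity
  have hS₀ne : S₀ ≠ 0 := ne_of_gt hS₀pos
  have hμne : μS ≠ 0 := ne_of_gt hμ
  have hsum : μS + qs = μS * R₀ := by rw [hqsval]; ring
  have hane : -μS - qs ≠ 0 := by
    have : -μS - qs = -(μS * R₀) := by rw [← hsum]; ring
    rw [this]
    exact neg_ne_zero.mpr (mul_ne_zero hμne hR₀ne)
  have hSb : Sb = S₀ / R₀ := by
    have h1 : lam = Sb * (μS * R₀) := by
      rw [← hsum, ← hqs] at *
      linarith [hEE1]
    rw [hS₀, h1]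
    field_simp
  -- the inverse of -A
  have hInvNeg : (-A)⁻¹ = -A⁻¹ :=
    Matrix.inv_eq_right_inv (by rw [Matrix.neg_mul, Matrix.mul_neg, neg_neg, Matrix.mul_nonsing_inv A hdet])
  set t : ℝ := β ⬝ᵥ A⁻¹.mulVec α with ht
  have htval : S₀ * t = -R₀ := by
    rw [hR₀, hInvNeg, Matrix.neg_mulVec, dotProduct_neg]
    ring
  -- determinant of JDFE
  have hDFE : JDFE.det = -μS * (A.det * (1 + S₀ * t)) := by
    rw [hJDFE, Matrix.det_fromBlocks_zero₂₁, det_add_smul_vecMulVec A hdet S₀ α β,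
      Matrix.det_fin_one]
    show -μS * _ = _
    ring
  -- determinant of JEE via Schur complement on the (1,1) block
  set P : Matrix (Fin 1) (Fin 1) ℝ := Matrix.of fun _ _ => -μS - qs with hPdef
  have hPdet : P.det = -μS - qs := Matrix.det_fin_one P
  haveI : Invertible P := P.invertibleOfIsUnitDet (by rw [hPdet]; exact Ne.isUnit hane)
  have hPinv : (⅟P : Matrix (Fin 1) (Fin 1) ℝ) = (-μS - qs)⁻¹ • 1 := by
    rw [Matrix.invOf_eq_nonsing_inv]
    apply Matrix.inv_eq_right_inv
    ext i j
    fin_cases i; fin_cases j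
    simp [hPdef, Matrix.mul_apply, Matrix.one_apply, mul_inv_cancel₀ hane]
  set c : ℝ := Sb * μS / (μS + qs) with hc
  have hSchur :
      (A + Sb • Matrix.vecMulVec α β) -
        (Matrix.of fun (i : Fin n) (_ : Fin 1) => qs * α i) * ⅟P *
          (Matrix.of fun (_ : Fin 1) (j : Fin n) => -(Sb * β j)) = A + c • Matrix.vecMulVec α β := by
    rw [hPinv]
    ext i j
    have ha' : μS + qs ≠ 0 := by
      intro h; apply hane; rw [show -μS - qs = -(μS+qs) by ring, h, neg_zero]
    simp [Matrix.mul_apply, Matrix.one_apply, vecMulVec_apply, hc, Fin.sum_univ_succ]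
    field_simp
    ring
  have hEEdet : JEE.det = (-μS - qs) * (A.det * (1 + c * t)) := by
    rw [hJEE, Matrix.det_fromBlocks₁₁, hSchur, det_add_smul_vecMulVec A hdet c α β, hPdet]
  -- final algebra
  have hcval : c = S₀ / (R₀ * R₀) := by
    rw [hc, hSb, hsum]; field_simp
  have htv2 : t = -R₀ / S₀ := by
    rw [eq_div_iff hS₀ne]; linarith [htval]
  have hct : c * t = -(1 / R₀) := by
    rw [hcval, htv2]
    field_simp
  have hEEval : JEE.det = μS * A.det * (1 - R₀) := by
    rw [hEEdet, hct, show -μS - qs = -(μS * R₀) by rw [← hsum]; ring]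
    field_simp
    ring
  refine ⟨hEEval, ?_⟩
  rw [hEEval, hDFE, htval]
  ring
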